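/- For all integers n ≥ 1 and k ≥ 1, the k-order harmonic numbers satisfy the recurrence H_n^{(k)} = H_{n−1}^{(k)} + Σ_{1 ≤ m ≤ i ≤ j ≤ n} C(n, j) · C(i, m) · (−1)^{j+m} · H_m^{(k)}, where the sum is over all triples of integers (m, i, j) with 1 ≤ m ≤ i ≤ j ≤ n. -/

import Mathlib

open Finset

/-- The `r`-order harmonic number `H r n = Σ_{m=1}^{n} 1/m^r`. -/
noncomputable def H (r n : ℕ) : ℝ :=
  ∑ m ∈ Finset.Icc 1 n, 1 / (m : ℝ) ^ r

lemma H_zero (r : ℕ) : H r 0 = 0 := by simp [H]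

lemma pascalR (n i : ℕ) (hn : 1 ≤ n) (hi : 1 ≤ i) :
    ((n.choose i : ℝ)) = (n - 1).choose (i - 1) + (n - 1).choose i := by
  obtain ⟨n, rfl⟩ : ∃ n', n = n' + 1 := ⟨n - 1, by omega⟩
  obtain ⟨i, rfl⟩ : ∃ i', i = i' + 1 := ⟨i - 1, by omega⟩
  rw [Nat.choose_succ_succ']
  push_cast
  simp

lemma alt_partial (n : ℕ) (hn : 1 ≤ n) (t : ℕ) :
    ∑ j ∈ Finset.range (t + 1), (-1 : ℝ) ^ j * n.choose j
      = (-1) ^ t * (n - 1).choose t := by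
  induction t with
  | zero => simp
  | succ t ih =>
    rw [Finset.sum_range_succ, ih, pascalR n (t + 1) hn (by omega)]
    simp only [Nat.add_sub_cancel]
    ring

lemma alt_total (n : ℕ) (hn : 1 ≤ n) :
    ∑ j ∈ Finset.range (n + 1), (-1 : ℝ) ^ j * n.choose j = 0 := by
  rw [alt_partial n hn n, Nat.choose_eq_zero_of_lt (by omega)]
  simp

lemma alt_tail (n i : ℕ) (hn : 1 ≤ n) (hi : 1 ≤ i) (hin : i ≤ n) :
    ∑ j ∈ Finset.Icc i n, (-1 : ℝ) ^ j * n.choose j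
      = (-1) ^ i * (n - 1).choose (i - 1) := by
  rw [← Finset.Ico_add_one_right_eq_Icc, Finset.sum_Ico_eq_sub _ (by omega : i ≤ n + 1),
    alt_total n hn]
  obtain ⟨i, rfl⟩ : ∃ i', i = i' + 1 := ⟨i - 1, by omega⟩
  rw [alt_partial n hn i]
  simp only [Nat.add_sub_cancel]
  ring

lemma inner_inv (N m : ℕ) (hm : 1 ≤ m) (hmN : m ≤ N) :
    ∑ i ∈ Finset.Icc m N, (-1 : ℝ) ^ i * N.choose i * i.choose m
      = if m = N then (-1 : ℝ) ^ N else 0 := by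
  have key : ∀ i ∈ Finset.Icc m N,
      (-1 : ℝ) ^ i * N.choose i * i.choose m
        = (-1 : ℝ) ^ i * N.choose m * (N - m).choose (i - m) := by
    intro i hi
    rw [Finset.mem_Icc] at hi
    have := Nat.choose_mul (n := N) (k := i) (s := m) hi.1
    have : ((N.choose i * i.choose m : ℕ) : ℝ)
        = ((N.choose m * (N - m).choose (i - m) : ℕ) : ℝ) := by rw [this]
    push_cast at this
    rw [mul_assoc, this, mul_assoc]
  rw [Finset.sum_congr rfl key, ← Finset.Ico_add_one_right_eq_Icc, Finset.sum_Ico_eq_sum_range]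
  have hr : N + 1 - m = (N - m) + 1 := by omega
  rw [hr]
  have key2 : ∀ x ∈ Finset.range ((N - m) + 1),
      (-1 : ℝ) ^ (m + x) * N.choose m * (N - m).choose (m + x - m)
        = ((-1 : ℝ) ^ m * N.choose m) * ((-1) ^ x * (N - m).choose x) := by
    intro x hx
    rw [Nat.add_sub_cancel_left, pow_add]
    ring
  rw [Finset.sum_congr rfl key2, ← Finset.mul_sum]
  rcases eq_or_lt_of_le hmN with h | h
  · subst h
    simp [Nat.sub_self]
  · rw [alt_total (N - m) (by omega), if_neg (by omega)]
    ring

lemma binom_inv (a : ℕ → ℝ) (h0 : a 0 = 0) (N : ℕ) :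
    ∑ i ∈ Finset.Icc 1 N, ∑ m ∈ Finset.Icc 1 i,
      (-1 : ℝ) ^ (i + m) * N.choose i * i.choose m * a m = a N := by
  rcases Nat.eq_zero_or_pos N with rfl | hN
  · simp [h0]
  have swap : (∑ i ∈ Finset.Ico 1 (N + 1), ∑ m ∈ Finset.Ico 1 (i + 1),
        (-1 : ℝ) ^ (i + m) * N.choose i * i.choose m * a m)
      = ∑ m ∈ Finset.Ico 1 (N + 1), ∑ i ∈ Finset.Ico m (N + 1),
        (-1 : ℝ) ^ (i + m) * N.choose i * i.choose m * a m :=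
    (Finset.sum_Ico_Ico_comm 1 (N + 1)
      (fun m i => (-1 : ℝ) ^ (i + m) * N.choose i * i.choose m * a m)).symm
  rw [show Finset.Icc 1 N = Finset.Ico 1 (N + 1) from (Finset.Ico_add_one_right_eq_Icc 1 N).symm]
  have econg : ∀ i ∈ Finset.Ico 1 (N + 1),
      (∑ m ∈ Finset.Icc 1 i, (-1 : ℝ) ^ (i + m) * N.choose i * i.choose m * a m)
        = ∑ m ∈ Finset.Ico 1 (i + 1),
            (-1 : ℝ) ^ (i + m) * N.choose i * i.choose m * a m := by
    intro i _
    rw [Finset.Ico_add_one_right_eq_Icc]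
  rw [Finset.sum_congr rfl econg, swap]
  have inner : ∀ m ∈ Finset.Ico 1 (N + 1),
      (∑ i ∈ Finset.Ico m (N + 1), (-1 : ℝ) ^ (i + m) * N.choose i * i.choose m * a m)
        = if m = N then a N else 0 := by
    intro m hm
    rw [Finset.mem_Ico] at hm
    have : ∀ i ∈ Finset.Ico m (N + 1),
        (-1 : ℝ) ^ (i + m) * N.choose i * i.choose m * a m
          = ((-1 : ℝ) ^ i * N.choose i * i.choose m) * ((-1) ^ m * a m) := by
      intro i _
      rw [pow_add]; ring
    rw [Finset.sum_congr rfl this, ← Finset.sum_mul, Finset.Ico_add_one_right_eq_Icc,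
      inner_inv N m hm.1 (by omega)]
    split_ifs with h
    · rw [h, ← mul_assoc, ← pow_add, Even.neg_one_pow ⟨N, rfl⟩, one_mul]
    · simp
  rw [Finset.sum_congr rfl inner,
    Finset.sum_ite_eq' (Finset.Ico 1 (N + 1)) N (fun _ => a N),
    if_pos (by rw [Finset.mem_Ico]; omega)]

theorem stmt_14 (n k : ℕ) (hn : 1 ≤ n) (hk : 1 ≤ k) :
    H k n = H k (n - 1) +
      ∑ j ∈ Finset.Icc 1 n, ∑ i ∈ Finset.Icc 1 j, ∑ m ∈ Finset.Icc 1 i,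
        (Nat.choose n j : ℝ) * (Nat.choose i m : ℝ) * (-1 : ℝ) ^ (j + m) * H k m := by
  have hswap :
      (∑ j ∈ Finset.Icc 1 n, ∑ i ∈ Finset.Icc 1 j, ∑ m ∈ Finset.Icc 1 i,
        (n.choose j : ℝ) * (i.choose m : ℝ) * (-1 : ℝ) ^ (j + m) * H k m)
      = ∑ i ∈ Finset.Icc 1 n, ∑ j ∈ Finset.Ico i (n + 1), ∑ m ∈ Finset.Icc 1 i,
        (n.choose j : ℝ) * (i.choose m : ℝ) * (-1 : ℝ) ^ (j + m) * H k m := by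
    rw [show Finset.Icc 1 n = Finset.Ico 1 (n + 1) from (Finset.Ico_add_one_right_eq_Icc 1 n).symm]
    have e : ∀ j ∈ Finset.Ico 1 (n + 1),
        (∑ i ∈ Finset.Icc 1 j, ∑ m ∈ Finset.Icc 1 i,
          (n.choose j : ℝ) * (i.choose m : ℝ) * (-1 : ℝ) ^ (j + m) * H k m)
        = ∑ i ∈ Finset.Ico 1 (j + 1), ∑ m ∈ Finset.Icc 1 i,
          (n.choose j : ℝ) * (i.choose m : ℝ) * (-1 : ℝ) ^ (j + m) * H k m := by
      intro j _
      rw [Finset.Ico_add_one_right_eq_Icc]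
    rw [Finset.sum_congr rfl e,
      ← Finset.sum_Ico_Ico_comm 1 (n + 1) (fun i j => ∑ m ∈ Finset.Icc 1 i,
          (n.choose j : ℝ) * (i.choose m : ℝ) * (-1 : ℝ) ^ (j + m) * H k m)]
  have step : ∀ i ∈ Finset.Icc 1 n,
      (∑ j ∈ Finset.Ico i (n + 1), ∑ m ∈ Finset.Icc 1 i,
        (n.choose j : ℝ) * (i.choose m : ℝ) * (-1 : ℝ) ^ (j + m) * H k m)
      = (∑ m ∈ Finset.Icc 1 i,
          (-1 : ℝ) ^ (i + m) * (n.choose i : ℝ) * (i.choose m : ℝ) * H k m)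
        - ∑ m ∈ Finset.Icc 1 i,
          (-1 : ℝ) ^ (i + m) * ((n - 1).choose i : ℝ) * (i.choose m : ℝ) * H k m := by
    intro i hi
    rw [Finset.mem_Icc] at hi
    rw [Finset.sum_comm, ← Finset.sum_sub_distrib]
    refine Finset.sum_congr rfl fun m _ => ?_
    have e2 : ∀ j ∈ Finset.Ico i (n + 1),
        (n.choose j : ℝ) * (i.choose m : ℝ) * (-1 : ℝ) ^ (j + m) * H k m
          = ((-1 : ℝ) ^ j * (n.choose j : ℝ))
            * ((i.choose m : ℝ) * (-1 : ℝ) ^ m * H k m) := by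
      intro j _
      rw [pow_add]; ring
    rw [Finset.sum_congr rfl e2, ← Finset.sum_mul, Finset.Ico_add_one_right_eq_Icc,
      alt_tail n i hn hi.1 hi.2,
      show (((n - 1).choose (i - 1) : ℕ) : ℝ)
          = (n.choose i : ℝ) - ((n - 1).choose i : ℝ) from by
        rw [pascalR n i hn hi.1]; ring]
    simp only [pow_add]
    ring
  rw [hswap, Finset.sum_congr rfl step, Finset.sum_sub_distrib,
    binom_inv (H k) (H_zero k) n]
  have htop : (∑ i ∈ Finset.Icc 1 n, ∑ m ∈ Finset.Icc 1 i,
      (-1 : ℝ) ^ (i + m) * ((n - 1).choose i : ℝ) * (i.choose m : ℝ) * H k m)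
      = H k (n - 1) := by
    rw [show Finset.Icc 1 n = Finset.Ico 1 (n + 1) from (Finset.Ico_add_one_right_eq_Icc 1 n).symm,
      Finset.sum_Ico_succ_top (by omega : 1 ≤ n),
      Nat.choose_eq_zero_of_lt (by omega : n - 1 < n)]
    simp only [Nat.cast_zero, mul_zero, zero_mul, Finset.sum_const_zero, add_zero]
    rw [show Finset.Ico 1 n = Finset.Icc 1 (n - 1) from by
        rw [← Finset.Ico_add_one_right_eq_Icc]; congr 1; omega,
      binom_inv (H k) (H_zero k) (n - 1)]
  rw [htop]
  ring
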